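/- Barrett reduction correctness: let n ≥ 1, let len be such that n < 2^len, and set R = ⌊2^{2·len}/n⌋. Then for any a with 0 ≤ a < 2^{2·len}, the quantity T = a − ⌊a·R/2^{2·len}⌋·n satisfies 0 ≤ T < 2n, and hence a mod n equals T if T < n and T − n otherwise. -/

import Mathlib

theorem barrett_reduction_correct (n len : ℕ) (hn : 1 ≤ n) (hlen : n < 2 ^ len)
    (a : ℕ) (ha : a < 2 ^ (2 * len)) :
    a - a * (2 ^ (2 * len) / n) / 2 ^ (2 * len) * n < 2 * n ∧
      a % n =
        (if a - a * (2 ^ (2 * len) / n) / 2 ^ (2 * len) * n < n then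
          a - a * (2 ^ (2 * len) / n) / 2 ^ (2 * len) * n
        else
          a - a * (2 ^ (2 * len) / n) / 2 ^ (2 * len) * n - n) := by
  set M := 2 ^ (2 * len) with hMdef
  have hM0 : 0 < M := Nat.pow_pos (by norm_num)
  set R := M / n with hRdef
  set q := a * R / M with hqdef
  set k := a / n with hkdef
  -- q ≤ k
  have h1 : q ≤ k := by
    have s1 : a * R ≤ a * M / n := Nat.mul_div_le_mul_div_assoc a M n
    have s2 : q ≤ a * M / n / M := Nat.div_le_div_right s1
    have s3 : a * M / n / M = a * M / (n * M) := Nat.div_div_eq_div_mul _ _ _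
    have s4 : a * M / (n * M) = a / n := Nat.mul_div_mul_right a n hM0
    omega
  -- k ≤ q + 1
  have h2 : k ≤ q + 1 := by
    have hkn : k * n ≤ a := Nat.div_mul_le_self a n
    have hRe : n * R + M % n = M := Nat.div_add_mod M n
    have hr1 : M % n < n := Nat.mod_lt M hn
    have key : k * M ≤ a * R + M := by
      have hmul : k * M * n ≤ (a * R + M) * n := by
        nlinarith [hkn, Nat.lt_of_lt_of_le ha (le_refl M), hr1, hRe,
          Nat.mul_le_mul_right M hkn, Nat.mul_le_mul (le_of_lt ha) (le_of_lt hr1)]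
      exact Nat.le_of_mul_le_mul_right hmul hn
    have : k ≤ (a * R + M) / M := (Nat.le_div_iff_mul_le hM0).mpr key
    have : (a * R + M) / M = q + 1 := by
      rw [Nat.add_div_right _ hM0]
    omega
  have hqn : q * n ≤ a := le_trans (Nat.mul_le_mul_right n h1) (Nat.div_mul_le_self a n)
  obtain ⟨m, hm, haeq⟩ : ∃ m, m < n ∧ a = n * k + m :=
    ⟨a % n, Nat.mod_lt a hn, (Nat.div_add_mod a n).symm⟩
  have hamod : a % n = m := by
    rw [haeq, Nat.mul_add_mod, Nat.mod_eq_of_lt hm]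
  have hcase : q = k ∨ q + 1 = k := by omega
  rcases hcase with hc | hc
  · -- q = k : T = m
    have hT : a - q * n = m := by
      rw [hc, mul_comm k n, haeq, Nat.add_sub_cancel_left]
    rw [hT]
    refine ⟨by omega, ?_⟩
    rw [if_pos hm, hamod]
  · -- q + 1 = k : T = n + m
    have haeq2 : a = n * q + (n + m) := by
      rw [haeq, ← hc]; ring
    have hT : a - q * n = n + m := by
      rw [mul_comm q n, haeq2, Nat.add_sub_cancel_left]
    rw [hT]
    refine ⟨by omega, ?_⟩
    rw [if_neg (by omega), hamod]
    omega
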